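/- Let G be a group, r ≥ 1, and let θ be the automorphism of G^r given by θ(x_1, …, x_r) = (x_2, …, x_r, τ(x_1)) for a fixed automorphism τ of G. For g = (g_1, …, g_r) ∈ G^r set ḡ = g_1 g_2 ⋯ g_r ∈ G. Then two elements g, g' ∈ G^r are 'twisted conjugate' (i.e., there exists x ∈ G^r with x · g · θ(x)^{-1} = g') if and only if there exists x_1 ∈ G with x_1 · ḡ · τ(x_1)^{-1} = ḡ'. -/
import Mathlib

/-- Partial-product step: `(take (k+1) (ofFn g)).prod = (take k (ofFn g)).prod * g ⟨k,h⟩`. -/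
theorem stmt1_aux {G : Type*} [Monoid G] {r : ℕ} (g : Fin r → G) (k : ℕ) (h : k < r) :
    ((List.ofFn g).take (k + 1)).prod = ((List.ofFn g).take k).prod * g ⟨k, h⟩ := by
  rw [List.prod_take_succ _ _ (by simpa using h)]
  congr 1
  simp

/-- For the twist `θ(x_1,…,x_r) = (x_2,…,x_r,τ(x_1))` of `G^r`, two elements `g, g'` of `G^r`
are twisted conjugate (`∃ x, x · g · θ(x)⁻¹ = g'`) iff the products `ḡ = g_1⋯g_r` and
`ḡ' = g'_1⋯g'_r` are `τ`-twisted conjugate in `G`. -/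
theorem stmt1 (G : Type*) [Group G] (r : ℕ) (hr : 1 ≤ r) (τ : G ≃* G)
    (θ : (Fin r → G) → (Fin r → G))
    (hθ : ∀ (x : Fin r → G) (i : Fin r),
      θ x i = if h : (i : ℕ) + 1 < r then x ⟨(i : ℕ) + 1, h⟩ else τ (x ⟨0, by omega⟩))
    (g g' : Fin r → G) :
    (∃ x : Fin r → G, ∀ i, x i * g i * (θ x i)⁻¹ = g' i) ↔
      ∃ x₁ : G, x₁ * (List.ofFn g).prod * (τ x₁)⁻¹ = (List.ofFn g').prod := by
  have htake : ∀ (f : Fin r → G), (List.ofFn f).take r = List.ofFn f := by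
    intro f; apply List.take_of_length_le; simp
  constructor
  · rintro ⟨x, hx⟩
    refine ⟨x ⟨0, by omega⟩, ?_⟩
    have key : ∀ k (h : k < r),
        x ⟨k, h⟩ = ((List.ofFn g').take k).prod⁻¹ * x ⟨0, by omega⟩ *
          ((List.ofFn g).take k).prod := by
      intro k
      induction k with
      | zero => intro h; simp
      | succ k ih =>
        intro h
        have hk : k < r := by omega
        have h1 := hx ⟨k, hk⟩
        rw [hθ] at h1
        rw [dif_pos (show (⟨k, hk⟩ : Fin r).1 + 1 < r from h)] at h1
        have h1' : x ⟨k, hk⟩ * g ⟨k, hk⟩ * (x ⟨k + 1, h⟩)⁻¹ = g' ⟨k, hk⟩ := h1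
        have h2 : x ⟨k + 1, h⟩ = (g' ⟨k, hk⟩)⁻¹ * x ⟨k, hk⟩ * g ⟨k, hk⟩ := by
          rw [← h1']; group
        rw [h2, ih hk, stmt1_aux g k hk, stmt1_aux g' k hk]
        group
    have hlast : (r - 1 : ℕ) < r := by omega
    have h1 := hx ⟨r - 1, hlast⟩
    rw [hθ, dif_neg (by simp; omega)] at h1
    rw [key (r - 1) hlast] at h1
    have hsucc : r - 1 + 1 = r := by omega
    have hg : (List.ofFn g).prod =
        ((List.ofFn g).take (r - 1)).prod * g ⟨r - 1, hlast⟩ := by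
      rw [← stmt1_aux g (r - 1) hlast, hsucc, htake]
    have hg' : (List.ofFn g').prod =
        ((List.ofFn g').take (r - 1)).prod * g' ⟨r - 1, hlast⟩ := by
      rw [← stmt1_aux g' (r - 1) hlast, hsucc, htake]
    rw [hg, hg', ← h1]
    group
  · rintro ⟨x₁, hx⟩
    refine ⟨fun i => ((List.ofFn g').take i).prod⁻¹ * x₁ * ((List.ofFn g).take i).prod, ?_⟩
    intro i
    rw [hθ]
    split_ifs with h
    · simp only
      rw [stmt1_aux g i.1 (by omega), stmt1_aux g' i.1 (by omega)]
      group
    · simp only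
      have hi : (i : ℕ) + 1 = r := by omega
      have hx' : x₁ * (((List.ofFn g).take i.1).prod * g i) * (τ x₁)⁻¹ =
          ((List.ofFn g').take i.1).prod * g' i := by
        rw [← stmt1_aux g i.1 i.2, ← stmt1_aux g' i.1 i.2, hi, htake, htake]
        exact hx
      simp only [List.take_zero, List.prod_nil, inv_one, one_mul, mul_one]
      rw [← mul_left_cancel_iff (a := ((List.ofFn g').take i.1).prod), ← hx']
      group
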